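/- arXiv:2601.00589 — 3 statements merged into one kernel-verified Lean document; each statement's English description precedes it below -/
import Mathlib

section
/- Brezis–Lieb lemma: Let 1<q<∞ and let f_n be a bounded sequence in L^q(R^d) with f_n → f almost everywhere. Then ||f_n||_q^q − ||f_n − f||_q^q → ||f||_q^q. -/
open MeasureTheory Filter

/-- MVT bound: for `0 ≤ y ≤ x`, `x^q - y^q ≤ q * x^(q-1) * (x - y)`. -/
lemma BL.rpow_sub_rpow_le {q : ℝ} (hq : 1 < q) {y x : ℝ} (hy : 0 ≤ y) (hyx : y ≤ x) :
    x ^ q - y ^ q ≤ q * x ^ (q - 1) * (x - y) := by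
  rcases eq_or_lt_of_le hyx with rfl | h
  · simp
  · have hx0 : 0 ≤ x := hy.trans hyx
    have hcont : ContinuousOn (fun t : ℝ => t ^ q) (Set.Icc y x) := fun t _ =>
      (Real.continuousAt_rpow_const t q (Or.inr (by linarith))).continuousWithinAt
    obtain ⟨c, hc, hderiv⟩ := exists_hasDerivAt_eq_slope (fun t => t ^ q)
      (fun t => q * t ^ (q - 1)) h hcont
      (fun t _ => Real.hasDerivAt_rpow_const (Or.inr hq.le))
    have hc0 : 0 ≤ c := le_trans hy hc.1.le
    have hcx : c ≤ x := hc.2.le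
    have hle : c ^ (q - 1) ≤ x ^ (q - 1) := Real.rpow_le_rpow hc0 hcx (by linarith)
    have hxy : 0 < x - y := by linarith
    have := hderiv
    have heq : x ^ q - y ^ q = q * c ^ (q - 1) * (x - y) := by
      field_simp at this
      linarith [this]
    rw [heq]
    have hq0 : 0 < q := by linarith
    have := mul_le_mul_of_nonneg_right (mul_le_mul_of_nonneg_left hle hq0.le) hxy.le
    linarith

/-- generalized MVT bound -/
lemma BL.aux_bound {q : ℝ} (hq : 1 < q) {y x s t : ℝ} (hy : 0 ≤ y) (hyx : y ≤ x)
    (hxs : x ≤ s) (hxt : x - y ≤ t) (ht : 0 ≤ t) :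
    x ^ q - y ^ q ≤ q * s ^ (q - 1) * t := by
  have h1 := BL.rpow_sub_rpow_le hq hy hyx
  have hx0 : 0 ≤ x := hy.trans hyx
  have hle : x ^ (q - 1) ≤ s ^ (q - 1) := Real.rpow_le_rpow hx0 hxs (by linarith)
  have hq0 : (0:ℝ) < q := by linarith
  have h2 : q * x ^ (q - 1) * (x - y) ≤ q * s ^ (q - 1) * t := by
    exact mul_le_mul (mul_le_mul_of_nonneg_left hle hq0.le) hxt (by linarith)
      (mul_nonneg hq0.le (Real.rpow_nonneg (hx0.trans hxs) _))
  linarith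

/-- Key pointwise inequality via MVT. -/
lemma BL.key_mvt {q : ℝ} (hq : 1 < q) (a b : ℝ) :
    |(|a + b|) ^ q - (|a|) ^ q| ≤ q * (|a| + |b|) ^ (q - 1) * |b| := by
  rw [abs_sub_le_iff]
  constructor
  · rcases le_total |a + b| |a| with h | h
    · have : |a + b| ^ q ≤ |a| ^ q := Real.rpow_le_rpow (abs_nonneg _) h (by linarith)
      have hpos : 0 ≤ q * (|a| + |b|) ^ (q - 1) * |b| :=
        mul_nonneg (mul_nonneg (by linarith) (Real.rpow_nonneg (by positivity) _)) (abs_nonneg b)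
      linarith
    · exact BL.aux_bound hq (abs_nonneg a) h (abs_add_le a b)
        (by simpa using (abs_sub_abs_le_abs_sub (a + b) a)) (abs_nonneg b)
  · rcases le_total |a| |a + b| with h | h
    · have : |a| ^ q ≤ |a + b| ^ q := Real.rpow_le_rpow (abs_nonneg _) h (by linarith)
      have hpos : 0 ≤ q * (|a| + |b|) ^ (q - 1) * |b| :=
        mul_nonneg (mul_nonneg (by linarith) (Real.rpow_nonneg (by positivity) _)) (abs_nonneg b)
      linarith
    · refine BL.aux_bound hq (abs_nonneg _) h (by linarith [abs_nonneg b, abs_add_le a b]) ?_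
        (abs_nonneg b)
      have := abs_sub_abs_le_abs_sub a (a + b)
      simpa using this

/-- ε–C inequality. -/
lemma BL.eps_ineq {q : ℝ} (hq : 1 < q) {ε : ℝ} (hε : 0 < ε) :
    ∃ C : ℝ, 0 < C ∧ ∀ a b : ℝ, |(|a + b|) ^ q - (|a|) ^ q| ≤ ε * |a| ^ q + C * |b| ^ q := by
  have hq0 : (0:ℝ) < q := by linarith
  have h2 : (0:ℝ) < q * 2 ^ (q - 1) := by positivity
  set δ : ℝ := min 1 (ε / (q * 2 ^ (q - 1))) with hδdef
  have hδ0 : 0 < δ := lt_min one_pos (by positivity)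
  have hδ1 : δ ≤ 1 := min_le_left _ _
  refine ⟨q * (1 + δ⁻¹) ^ (q - 1), by positivity, fun a b => ?_⟩
  have hkey := BL.key_mvt hq a b
  rcases le_total |b| (δ * |a|) with hb | hb
  · -- small-b case
    rcases eq_or_ne a 0 with rfl | ha
    · have hb0 : b = 0 := by
        have := abs_nonneg b
        have : |b| = 0 := le_antisymm (by simpa using hb) (abs_nonneg b)
        exact abs_eq_zero.mp this
      subst hb0; simp [Real.zero_rpow hq0.ne']
    · have ha0 : 0 < |a| := abs_pos.mpr ha
      have hs : |a| + |b| ≤ (1 + δ) * |a| := by nlinarith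
      have hs' : (|a| + |b|) ^ (q - 1) ≤ ((1 + δ) * |a|) ^ (q - 1) :=
        Real.rpow_le_rpow (by positivity) hs (by linarith)
      have hmul : ((1 + δ) * |a|) ^ (q - 1) = (1 + δ) ^ (q - 1) * |a| ^ (q - 1) :=
        Real.mul_rpow (by linarith) (abs_nonneg a)
      have h1δ : (1 + δ) ^ (q - 1) ≤ 2 ^ (q - 1) :=
        Real.rpow_le_rpow (by linarith) (by linarith) (by linarith)
      have haq : |a| ^ (q - 1) * |a| = |a| ^ q := by
        have h := Real.rpow_add ha0 (q - 1) 1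
        rw [Real.rpow_one, show q - 1 + 1 = q by ring] at h
        exact h.symm
      have hδε : q * 2 ^ (q - 1) * δ ≤ ε := by
        have : δ ≤ ε / (q * 2 ^ (q - 1)) := min_le_right _ _
        calc q * 2 ^ (q - 1) * δ ≤ q * 2 ^ (q - 1) * (ε / (q * 2 ^ (q - 1))) := by
              exact mul_le_mul_of_nonneg_left this h2.le
          _ = ε := by field_simp
      have hC0 : 0 ≤ q * (1 + δ⁻¹) ^ (q - 1) * |b| ^ q := by positivity
      calc |(|a + b|) ^ q - (|a|) ^ q| ≤ q * (|a| + |b|) ^ (q - 1) * |b| := hkey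
        _ ≤ q * ((1 + δ) ^ (q - 1) * |a| ^ (q - 1)) * (δ * |a|) := by
            rw [← hmul]
            apply mul_le_mul (mul_le_mul_of_nonneg_left hs' hq0.le) hb (abs_nonneg b)
            positivity
        _ = q * (1 + δ) ^ (q - 1) * δ * (|a| ^ (q - 1) * |a|) := by ring
        _ ≤ q * 2 ^ (q - 1) * δ * (|a| ^ (q - 1) * |a|) := by
            apply mul_le_mul_of_nonneg_right _ (by positivity)
            have : q * (1 + δ) ^ (q - 1) ≤ q * 2 ^ (q - 1) :=
              mul_le_mul_of_nonneg_left h1δ hq0.le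
            nlinarith
        _ ≤ ε * (|a| ^ (q - 1) * |a|) := mul_le_mul_of_nonneg_right hδε (by positivity)
        _ = ε * |a| ^ q := by rw [haq]
        _ ≤ ε * |a| ^ q + q * (1 + δ⁻¹) ^ (q - 1) * |b| ^ q := by linarith
  · -- large-b case
    rcases eq_or_ne b 0 with rfl | hbne
    · simp; positivity
    · have hb0 : 0 < |b| := abs_pos.mpr hbne
      have hsδ : |a| ≤ δ⁻¹ * |b| := by
        calc |a| = δ⁻¹ * (δ * |a|) := by
              rw [← mul_assoc, inv_mul_cancel₀ hδ0.ne', one_mul]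
          _ ≤ δ⁻¹ * |b| := mul_le_mul_of_nonneg_left hb (by positivity)
      have hs : |a| + |b| ≤ (1 + δ⁻¹) * |b| := by nlinarith
      have hs' : (|a| + |b|) ^ (q - 1) ≤ ((1 + δ⁻¹) * |b|) ^ (q - 1) :=
        Real.rpow_le_rpow (by positivity) hs (by linarith)
      have hmul : ((1 + δ⁻¹) * |b|) ^ (q - 1) = (1 + δ⁻¹) ^ (q - 1) * |b| ^ (q - 1) :=
        Real.mul_rpow (by positivity) (abs_nonneg b)
      have hbq : |b| ^ (q - 1) * |b| = |b| ^ q := by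
        have h := Real.rpow_add hb0 (q - 1) 1
        rw [Real.rpow_one, show q - 1 + 1 = q by ring] at h
        exact h.symm
      have hε' : 0 ≤ ε * |a| ^ q := by positivity
      calc |(|a + b|) ^ q - (|a|) ^ q| ≤ q * (|a| + |b|) ^ (q - 1) * |b| := hkey
        _ ≤ q * ((1 + δ⁻¹) ^ (q - 1) * |b| ^ (q - 1)) * |b| := by
            rw [← hmul]
            apply mul_le_mul_of_nonneg_right (mul_le_mul_of_nonneg_left hs' hq0.le)
              (abs_nonneg b)
        _ = q * (1 + δ⁻¹) ^ (q - 1) * (|b| ^ (q - 1) * |b|) := by ring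
        _ = q * (1 + δ⁻¹) ^ (q - 1) * |b| ^ q := by rw [hbq]
        _ ≤ ε * |a| ^ q + q * (1 + δ⁻¹) ^ (q - 1) * |b| ^ q := by linarith

/-- Brezis–Lieb lemma: if `{f_n}` is bounded in `L^q(ℝ^d)` (`1 < q < ∞`) and `f_n → f` a.e.,
then `‖f_n‖_q^q - ‖f_n - f‖_q^q → ‖f‖_q^q`. -/
theorem brezis_lieb (d : ℕ) (q : ℝ) (hq : 1 < q)
    (f : ℕ → EuclideanSpace ℝ (Fin d) → ℝ) (f₀ : EuclideanSpace ℝ (Fin d) → ℝ)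
    (hmem : ∀ n, MemLp (f n) (ENNReal.ofReal q) volume)
    (hbdd : ∃ M : ℝ, ∀ n, eLpNorm (f n) (ENNReal.ofReal q) volume ≤ ENNReal.ofReal M)
    (hae : ∀ᵐ x : EuclideanSpace ℝ (Fin d), Tendsto (fun n => f n x) atTop (nhds (f₀ x))) :
    Tendsto (fun n => (∫ x : EuclideanSpace ℝ (Fin d), |f n x| ^ q)
        - ∫ x : EuclideanSpace ℝ (Fin d), |f n x - f₀ x| ^ q)
      atTop (nhds (∫ x : EuclideanSpace ℝ (Fin d), |f₀ x| ^ q)) := by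
  obtain ⟨M, hM⟩ := hbdd
  set p : ENNReal := ENNReal.ofReal q with hp
  have hq0 : (0:ℝ) < q := by linarith
  have hp0 : p ≠ 0 := by
    simp only [hp, ne_eq, ENNReal.ofReal_eq_zero, not_le]; linarith
  have hptop : p ≠ ⊤ := ENNReal.ofReal_ne_top
  have hpq : p.toReal = q := ENNReal.toReal_ofReal hq0.le
  have hp1 : (1:ENNReal) ≤ p := by
    rw [hp, ← ENNReal.ofReal_one]
    exact ENNReal.ofReal_le_ofReal hq.le
  have hmeas : ∀ n, AEStronglyMeasurable (f n) (volume : Measure (EuclideanSpace ℝ (Fin d))) := fun n => (hmem n).1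
  have hf₀meas : AEStronglyMeasurable f₀ (volume : Measure (EuclideanSpace ℝ (Fin d))) :=
    aestronglyMeasurable_of_tendsto_ae atTop hmeas hae
  have hf₀norm : eLpNorm f₀ p volume ≤ ENNReal.ofReal M := by
    refine le_trans (Lp.eLpNorm_lim_le_liminf_eLpNorm hmeas f₀ hae) ?_
    refine le_trans (Filter.liminf_le_liminf (Filter.Eventually.of_forall hM)) ?_
    simp [Filter.liminf_const]
  have hf₀mem : MemLp f₀ p volume :=
    ⟨hf₀meas, lt_of_le_of_lt hf₀norm ENNReal.ofReal_lt_top⟩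
  set g : ℕ → EuclideanSpace ℝ (Fin d) → ℝ := fun n x => f n x - f₀ x with hgdef
  have hgmem : ∀ n, MemLp (g n) p volume := fun n => (hmem n).sub hf₀mem
  have hgmeas : ∀ n, AEStronglyMeasurable (g n) (volume : Measure (EuclideanSpace ℝ (Fin d))) := fun n => (hgmem n).1
  have hcont : Continuous (fun t : ℝ => |t| ^ q) := by
    have h1 : Continuous fun s : ℝ => s ^ q := by
      rw [continuous_iff_continuousAt]
      exact fun s => Real.continuousAt_rpow_const s q (Or.inr hq0.le)
    exact h1.comp continuous_abs
  have hint : ∀ n, Integrable (fun x => |f n x| ^ q) (volume : Measure (EuclideanSpace ℝ (Fin d))) := fun n => by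
    have := (hmem n).integrable_norm_rpow hp0 hptop
    simpa [hpq, Real.norm_eq_abs] using this
  have hgint : ∀ n, Integrable (fun x => |g n x| ^ q) (volume : Measure (EuclideanSpace ℝ (Fin d))) := fun n => by
    have := (hgmem n).integrable_norm_rpow hp0 hptop
    simpa [hpq, Real.norm_eq_abs] using this
  have hf₀int : Integrable (fun x => |f₀ x| ^ q) (volume : Measure (EuclideanSpace ℝ (Fin d))) := by
    have := hf₀mem.integrable_norm_rpow hp0 hptop
    simpa [hpq, Real.norm_eq_abs] using this
  -- uniform bound on ∫ |g n|^q
  set K : ℝ := (2 * max M 0) ^ q with hK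
  have hK0 : 0 ≤ K := Real.rpow_nonneg (by positivity) q
  have hgbound : ∀ n, (∫ x, |g n x| ^ q) ≤ K := by
    intro n
    have h1 : eLpNorm (g n) p volume ≤ ENNReal.ofReal (2 * max M 0) := by
      calc eLpNorm (g n) p volume ≤ eLpNorm (f n) p volume + eLpNorm f₀ p volume :=
            eLpNorm_sub_le (hmeas n) hf₀meas hp1
        _ ≤ ENNReal.ofReal (max M 0) + ENNReal.ofReal (max M 0) :=
            add_le_add ((hM n).trans (ENNReal.ofReal_le_ofReal (le_max_left _ _)))
              (hf₀norm.trans (ENNReal.ofReal_le_ofReal (le_max_left _ _)))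
        _ = ENNReal.ofReal (2 * max M 0) := by
            rw [← ENNReal.ofReal_add (le_max_right _ _) (le_max_right _ _)]
            ring_nf
    rw [(hgmem n).eLpNorm_eq_integral_rpow_norm hp0 hptop,
      ENNReal.ofReal_le_ofReal_iff (by positivity)] at h1
    simp only [hpq, Real.norm_eq_abs] at h1
    have hnn : 0 ≤ ∫ x, |g n x| ^ q :=
      integral_nonneg fun x => Real.rpow_nonneg (abs_nonneg _) q
    calc (∫ x, |g n x| ^ q) = ((∫ x, |g n x| ^ q) ^ q⁻¹) ^ q :=
          (Real.rpow_inv_rpow hnn hq0.ne').symm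
      _ ≤ (2 * max M 0) ^ q := Real.rpow_le_rpow (by positivity) h1 hq0.le
  -- the error functions
  set φ : ℕ → EuclideanSpace ℝ (Fin d) → ℝ := fun n x => |(|f n x|) ^ q - (|g n x|) ^ q - (|f₀ x|) ^ q| with hφdef
  have hφnonneg : ∀ n x, 0 ≤ φ n x := fun n x => abs_nonneg _
  have hφmeas : ∀ n, AEStronglyMeasurable (φ n) (volume : Measure (EuclideanSpace ℝ (Fin d))) := fun n => by
    exact continuous_abs.comp_aestronglyMeasurable
      (((hcont.comp_aestronglyMeasurable (hmeas n)).sub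
        (hcont.comp_aestronglyMeasurable (hgmeas n))).sub
        (hcont.comp_aestronglyMeasurable hf₀meas))
  have hφint : ∀ n, Integrable (φ n) (volume : Measure (EuclideanSpace ℝ (Fin d))) := fun n =>
    (((hint n).sub (hgint n)).sub hf₀int).abs
  have hφtend : ∀ᵐ x : EuclideanSpace ℝ (Fin d), Tendsto (fun n => φ n x) atTop (nhds 0) := by
    filter_upwards [hae] with x hx
    have h1 : Tendsto (fun n => (|f n x|) ^ q) atTop (nhds ((|f₀ x|) ^ q)) :=
      (hcont.tendsto _).comp hx
    have h2 : Tendsto (fun n => g n x) atTop (nhds 0) := by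
      simpa [hgdef] using hx.sub (tendsto_const_nhds (x := f₀ x))
    have h3 : Tendsto (fun n => (|g n x|) ^ q) atTop (nhds 0) := by
      have := (hcont.tendsto 0).comp h2
      simpa [Function.comp_def, Real.zero_rpow hq0.ne'] using this
    have h4 : Tendsto (fun n => (|f n x|) ^ q - (|g n x|) ^ q - (|f₀ x|) ^ q) atTop
        (nhds 0) := by
      have := (h1.sub h3).sub (tendsto_const_nhds (x := (|f₀ x|) ^ q))
      simpa using this
    have := (continuous_abs.tendsto 0).comp h4
    simpa [Function.comp_def, hφdef] using this
  -- main step: ∫ φ n → 0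
  have hφ0 : Tendsto (fun n => ∫ x, φ n x) atTop (nhds 0) := by
    rw [Metric.tendsto_atTop]
    intro ε' hε'
    set ε : ℝ := ε' / (2 * (K + 1)) with hε
    have hεpos : 0 < ε := by positivity
    obtain ⟨C, hC, hCineq⟩ := BL.eps_ineq hq hεpos
    have hptw : ∀ n x, φ n x ≤ ε * (|g n x|) ^ q + (C + 1) * (|f₀ x|) ^ q := by
      intro n x
      have h := hCineq (g n x) (f₀ x)
      have hgf : g n x + f₀ x = f n x := by simp [hgdef]
      rw [hgf] at h
      have habs : |((|f₀ x|) ^ q)| = (|f₀ x|) ^ q :=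
        abs_of_nonneg (Real.rpow_nonneg (abs_nonneg _) q)
      calc φ n x = |((|f n x|) ^ q - (|g n x|) ^ q) + (-((|f₀ x|) ^ q))| := by
            rw [hφdef]; ring_nf
        _ ≤ |((|f n x|) ^ q - (|g n x|) ^ q)| + |(-((|f₀ x|) ^ q))| := abs_add_le _ _
        _ = |((|f n x|) ^ q - (|g n x|) ^ q)| + (|f₀ x|) ^ q := by rw [abs_neg, habs]
        _ ≤ (ε * (|g n x|) ^ q + C * (|f₀ x|) ^ q) + (|f₀ x|) ^ q := by linarith
        _ = ε * (|g n x|) ^ q + (C + 1) * (|f₀ x|) ^ q := by ring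
    set ψ : ℕ → EuclideanSpace ℝ (Fin d) → ℝ := fun n x => max (φ n x - ε * (|g n x|) ^ q) 0 with hψdef
    have hψint : ∀ n, Integrable (ψ n) (volume : Measure (EuclideanSpace ℝ (Fin d))) := fun n =>
      ((hφint n).sub ((hgint n).const_mul ε)).pos_part
    have hψmeas : ∀ n, AEStronglyMeasurable (ψ n) (volume : Measure (EuclideanSpace ℝ (Fin d))) := fun n =>
      (hψint n).aestronglyMeasurable
    have hψbound : ∀ n, ∀ᵐ x : EuclideanSpace ℝ (Fin d), ‖ψ n x‖ ≤ (C + 1) * (|f₀ x|) ^ q := by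
      intro n
      refine Filter.Eventually.of_forall fun x => ?_
      have h1 : φ n x - ε * (|g n x|) ^ q ≤ (C + 1) * (|f₀ x|) ^ q := by
        have := hptw n x; linarith
      have h2 : (0:ℝ) ≤ (C + 1) * (|f₀ x|) ^ q := by positivity
      rw [Real.norm_eq_abs, abs_of_nonneg (le_max_right _ _)]
      exact max_le h1 h2
    have hψtend : ∀ᵐ x : EuclideanSpace ℝ (Fin d), Tendsto (fun n => ψ n x) atTop (nhds 0) := by
      filter_upwards [hφtend] with x hx
      have h0 : ∀ n, 0 ≤ ψ n x := fun n => le_max_right _ _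
      have hub : ∀ n, ψ n x ≤ φ n x := fun n => by
        have : φ n x - ε * (|g n x|) ^ q ≤ φ n x := by
          have : 0 ≤ ε * (|g n x|) ^ q := by positivity
          linarith
        exact max_le this (hφnonneg n x)
      exact squeeze_zero h0 hub hx
    have hψ0 : Tendsto (fun n => ∫ x, ψ n x) atTop (nhds 0) := by
      have := tendsto_integral_of_dominated_convergence
        (fun x => (C + 1) * (|f₀ x|) ^ q) hψmeas (hf₀int.const_mul (C + 1)) hψbound
        (by simpa using hψtend)
      simpa using this
    rw [Metric.tendsto_atTop] at hψ0
    obtain ⟨N, hN⟩ := hψ0 (ε' / 2) (by positivity)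
    refine ⟨N, fun n hn => ?_⟩
    have hψlt : (∫ x, ψ n x) < ε' / 2 := by
      have := hN n hn
      rw [Real.dist_eq, sub_zero] at this
      exact lt_of_le_of_lt (le_abs_self _) this
    have hφle : (∫ x, φ n x) ≤ (∫ x, ψ n x) + ε * (∫ x, (|g n x|) ^ q) := by
      have hptw2 : ∀ x, φ n x ≤ ψ n x + ε * (|g n x|) ^ q := fun x => by
        have : φ n x - ε * (|g n x|) ^ q ≤ ψ n x := le_max_left _ _
        linarith
      calc (∫ x, φ n x) ≤ ∫ x, (ψ n x + ε * (|g n x|) ^ q) :=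
            integral_mono (hφint n) ((hψint n).add ((hgint n).const_mul ε)) hptw2
        _ = (∫ x, ψ n x) + ε * (∫ x, (|g n x|) ^ q) := by
            rw [integral_add (hψint n) ((hgint n).const_mul ε), integral_const_mul]
    have hεK : ε * (∫ x, (|g n x|) ^ q) ≤ ε' / 2 := by
      have h1 : ε * (∫ x, (|g n x|) ^ q) ≤ ε * (K + 1) :=
        mul_le_mul_of_nonneg_left (by linarith [hgbound n]) hεpos.le
      have h2 : ε * (K + 1) = ε' / 2 := by
        rw [hε]; field_simp
      linarith
    have hφnn : 0 ≤ ∫ x, φ n x := integral_nonneg (hφnonneg n)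
    rw [Real.dist_eq, sub_zero, abs_of_nonneg hφnn]
    linarith
  -- conclude
  have hkey : ∀ n, |((∫ x : EuclideanSpace ℝ (Fin d), |f n x| ^ q) - ∫ x : EuclideanSpace ℝ (Fin d), |f n x - f₀ x| ^ q)
      - ∫ x : EuclideanSpace ℝ (Fin d), |f₀ x| ^ q| ≤ ∫ x, φ n x := by
    intro n
    have heq : ((∫ x : EuclideanSpace ℝ (Fin d), |f n x| ^ q) - ∫ x : EuclideanSpace ℝ (Fin d), |f n x - f₀ x| ^ q) - ∫ x : EuclideanSpace ℝ (Fin d), |f₀ x| ^ q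
        = ∫ x : EuclideanSpace ℝ (Fin d), ((|f n x|) ^ q - (|g n x|) ^ q - (|f₀ x|) ^ q) := by
      have e1 := integral_sub (hint n) (hgint n) (μ := volume)
      have e2 := integral_sub ((hint n).sub (hgint n)) hf₀int (μ := volume)
      simp only [Pi.sub_apply] at e1 e2
      rw [show (∫ x : EuclideanSpace ℝ (Fin d), |f n x - f₀ x| ^ q)
          = ∫ x : EuclideanSpace ℝ (Fin d), |g n x| ^ q from rfl, e2, e1]
    rw [heq]
    have := norm_integral_le_integral_norm
      (fun x : EuclideanSpace ℝ (Fin d) => (|f n x|) ^ q - (|g n x|) ^ q - (|f₀ x|) ^ q) (μ := volume)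
    simpa [Real.norm_eq_abs, hφdef] using this
  rw [← tendsto_sub_nhds_zero_iff]
  exact squeeze_zero_norm (fun n => by simpa [Real.norm_eq_abs] using hkey n) hφ0
end

section
/- Nonlinear Brezis–Lieb lemma for the map J_q(t) = |t|^{q−2} t: if 1<q<∞, {f_n} is bounded in L^q(R^d), and f_n → f a.e., then J_q(f_n) − J_q(f_n − f) → J_q(f) strongly in L^{q'}(R^d), where q' = q/(q−1). -/
open MeasureTheory Filter
open scoped ENNReal NNReal

/-- `J_q(t) = |t|^{q-2} t`. -/
noncomputable def Jmap (q t : ℝ) : ℝ := |t| ^ (q - 2) * t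


lemma Jmap_zero (q : ℝ) : Jmap q 0 = 0 := by simp [Jmap]

lemma abs_Jmap (q : ℝ) (hq : 1 < q) (t : ℝ) : |Jmap q t| = |t| ^ (q - 1) := by
  rcases eq_or_ne t 0 with rfl | ht
  · simp [Jmap, Real.zero_rpow (by linarith : q - 1 ≠ 0)]
  · have h0 : (0:ℝ) < |t| := abs_pos.mpr ht
    rw [Jmap, abs_mul, abs_of_nonneg (Real.rpow_nonneg (abs_nonneg t) _), ← Real.rpow_add_one h0.ne']
    ring_nf

lemma Jmap_of_nonneg (q : ℝ) (hq : 1 < q) {t : ℝ} (ht : 0 ≤ t) :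
    Jmap q t = t ^ (q - 1) := by
  rcases eq_or_lt_of_le ht with rfl | ht
  · simp [Jmap, Real.zero_rpow (by linarith : q - 1 ≠ 0)]
  · rw [Jmap, abs_of_pos ht, ← Real.rpow_add_one ht.ne']
    ring_nf

lemma Jmap_of_nonpos (q : ℝ) (hq : 1 < q) {t : ℝ} (ht : t ≤ 0) :
    Jmap q t = -(-t) ^ (q - 1) := by
  rcases eq_or_lt_of_le ht with rfl | ht
  · simp [Jmap, Real.zero_rpow (by linarith : q - 1 ≠ 0)]
  · have h1 : (0:ℝ) < -t := by linarith
    rw [Jmap, abs_of_neg ht]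
    rw [show (-t) ^ (q - 2) * t = -((-t) ^ (q-2) * (-t)) by ring, ← Real.rpow_add_one h1.ne']
    ring_nf

lemma Jmap_mono (q : ℝ) (hq : 1 < q) : Monotone (Jmap q) := by
  intro v u huv
  have hq1 : (0:ℝ) ≤ q - 1 := by linarith
  rcases le_or_gt 0 v with hv | hv
  · rw [Jmap_of_nonneg q hq hv, Jmap_of_nonneg q hq (hv.trans huv)]
    exact Real.rpow_le_rpow hv huv hq1
  · rcases le_or_gt u 0 with hu | hu
    · rw [Jmap_of_nonpos q hq hv.le, Jmap_of_nonpos q hq hu]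
      have : (0:ℝ) ≤ -u := by linarith
      exact neg_le_neg (Real.rpow_le_rpow this (by linarith) hq1)
    · rw [Jmap_of_nonpos q hq hv.le, Jmap_of_nonneg q hq hu.le]
      have h1 : (0:ℝ) ≤ (-v) ^ (q-1) := Real.rpow_nonneg (by linarith) _
      have h2 : (0:ℝ) ≤ u ^ (q-1) := Real.rpow_nonneg hu.le _
      linarith

lemma continuous_Jmap (q : ℝ) (hq : 1 < q) : Continuous (Jmap q) := by
  rw [continuous_iff_continuousAt]
  intro x
  rcases eq_or_ne x 0 with rfl | hx
  · have h1 : Tendsto (fun t : ℝ => |t| ^ (q - 1)) (nhds 0) (nhds 0) := by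
      have hc : ContinuousAt (fun s : ℝ => s ^ (q - 1)) 0 :=
        Real.continuousAt_rpow_const 0 (q - 1) (Or.inr (by linarith))
      have h2 : ContinuousAt (fun t : ℝ => |t| ^ (q - 1)) 0 := by
        have hc' : ContinuousAt (fun s : ℝ => s ^ (q - 1)) (|(0:ℝ)|) := by
          rw [abs_zero]; exact hc
        have h3 : ContinuousAt (abs : ℝ → ℝ) 0 := continuous_abs.continuousAt
        exact hc'.comp h3
      have := h2.tendsto
      simpa [Real.zero_rpow (by linarith : q - 1 ≠ 0)] using this
    have habs : ∀ t : ℝ, ‖Jmap q t‖ ≤ |t| ^ (q - 1) := fun t => by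
      rw [Real.norm_eq_abs, abs_Jmap q hq t]
    have := squeeze_zero_norm habs h1
    simpa [ContinuousAt, Jmap_zero] using this
  · have h1 : ContinuousAt (fun t : ℝ => |t| ^ (q - 2)) x := by
      have hc : ContinuousAt (fun s : ℝ => s ^ (q - 2)) |x| :=
        Real.continuousAt_rpow_const _ _ (Or.inl (abs_ne_zero.mpr hx))
      exact hc.comp continuous_abs.continuousAt
    exact h1.mul continuousAt_id

lemma hasDerivAt_Jmap (q : ℝ) (hq : 1 < q) {t : ℝ} (ht : t ≠ 0) :
    HasDerivAt (Jmap q) ((q - 1) * |t| ^ (q - 2)) t := by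
  rcases ht.lt_or_gt with ht | ht
  · -- t < 0
    have h1 : HasDerivAt (fun s : ℝ => -((-s) ^ (q - 1))) ((q - 1) * (-t) ^ (q - 2)) t := by
      have h2 : HasDerivAt (fun s : ℝ => s ^ (q - 1)) ((q - 1) * (-t) ^ (q - 1 - 1)) (-t) :=
        Real.hasDerivAt_rpow_const (Or.inl (by linarith))
      have h3 := (h2.comp t (hasDerivAt_neg t)).neg
      have : q - 1 - 1 = q - 2 := by ring
      rw [this] at h3
      exact h3.congr_deriv (by ring)
    have h4 : HasDerivAt (Jmap q) ((q - 1) * (-t) ^ (q - 2)) t := by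
      refine h1.congr_of_eventuallyEq ?_
      filter_upwards [Iio_mem_nhds ht] with s hs
      exact Jmap_of_nonpos q hq (le_of_lt hs)
    rwa [abs_of_neg ht]
  · -- 0 < t
    have h1 : HasDerivAt (fun s : ℝ => s ^ (q - 1)) ((q - 1) * t ^ (q - 2)) t := by
      have h2 : HasDerivAt (fun s : ℝ => s ^ (q - 1)) ((q - 1) * t ^ (q - 1 - 1)) t :=
        Real.hasDerivAt_rpow_const (Or.inl (by linarith))
      have : q - 1 - 1 = q - 2 := by ring
      rwa [this] at h2
    have h1' : HasDerivAt (Jmap q) ((q - 1) * t ^ (q - 2)) t := by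
      refine h1.congr_of_eventuallyEq ?_
      filter_upwards [Ioi_mem_nhds ht] with s hs
      exact Jmap_of_nonneg q hq (le_of_lt hs)
    rwa [abs_of_pos ht]

-- real subadditivity of rpow for exponent in [0,1]
lemma rpow_add_le_add_rpow_real {s : ℝ} (hs0 : 0 ≤ s) (hs1 : s ≤ 1) {a b : ℝ}
    (ha : 0 ≤ a) (hb : 0 ≤ b) : (a + b) ^ s ≤ a ^ s + b ^ s := by
  have := NNReal.rpow_add_le_add_rpow a.toNNReal b.toNNReal hs0 hs1
  have h := NNReal.coe_le_coe.mpr this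
  rw [NNReal.coe_add] at h
  push_cast [NNReal.coe_rpow, Real.coe_toNNReal a ha, Real.coe_toNNReal b hb] at h
  exact h

lemma rpow_sub_le {s : ℝ} (hs0 : 0 ≤ s) (hs1 : s ≤ 1) {a b : ℝ}
    (hb : 0 ≤ b) (hba : b ≤ a) : a ^ s - b ^ s ≤ (a - b) ^ s := by
  have h := rpow_add_le_add_rpow_real hs0 hs1 hb (by linarith : (0:ℝ) ≤ a - b)
  rw [show b + (a - b) = a by ring] at h
  linarith

/-- Hölder-type bound for `q ≤ 2`. -/
lemma Jmap_sub_le_of_le_two (q : ℝ) (hq : 1 < q) (hq2 : q ≤ 2) (u v : ℝ) :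
    |Jmap q u - Jmap q v| ≤ 2 * |u - v| ^ (q - 1) := by
  have hs0 : (0:ℝ) ≤ q - 1 := by linarith
  have hs1 : q - 1 ≤ 1 := by linarith
  -- WLOG v ≤ u
  wlog huv : v ≤ u with H
  · have := H q hq hq2 v u hs0 hs1 (le_of_not_ge huv)
    rwa [abs_sub_comm (Jmap q v), abs_sub_comm v u] at this
  have hmono := Jmap_mono q hq huv
  rw [abs_of_nonneg (by linarith : 0 ≤ Jmap q u - Jmap q v),
    abs_of_nonneg (by linarith : 0 ≤ u - v)]
  rcases le_or_gt 0 v with hv | hv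
  · rw [Jmap_of_nonneg q hq hv, Jmap_of_nonneg q hq (hv.trans huv)]
    have := rpow_sub_le hs0 hs1 hv huv
    have hnn : (0:ℝ) ≤ (u - v) ^ (q - 1) := Real.rpow_nonneg (by linarith) _
    linarith
  · rcases le_or_gt u 0 with hu | hu
    · rw [Jmap_of_nonpos q hq hv.le, Jmap_of_nonpos q hq hu]
      have := rpow_sub_le hs0 hs1 (by linarith : (0:ℝ) ≤ -u) (by linarith : -u ≤ -v)
      rw [show -v - -u = u - v by ring] at this
      have hnn : (0:ℝ) ≤ (u - v) ^ (q - 1) := Real.rpow_nonneg (by linarith) _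
      linarith
    · rw [Jmap_of_nonpos q hq hv.le, Jmap_of_nonneg q hq hu.le]
      have h1 : u ^ (q-1) ≤ (u - v) ^ (q-1) :=
        Real.rpow_le_rpow hu.le (by linarith) hs0
      have h2 : (-v) ^ (q-1) ≤ (u - v) ^ (q-1) :=
        Real.rpow_le_rpow (by linarith) (by linarith) hs0
      linarith

/-- MVT bound for `2 < q`. -/
lemma Jmap_sub_le_of_two_lt (q : ℝ) (hq2 : 2 < q) (x y : ℝ) :
    |Jmap q (x + y) - Jmap q x| ≤ (q - 1) * (|x| + |y|) ^ (q - 2) * |y| := by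
  have hq : 1 < q := by linarith
  -- derivative everywhere, including 0
  have hderiv : ∀ t : ℝ, HasDerivAt (Jmap q) ((q - 1) * |t| ^ (q - 2)) t := by
    intro t
    rcases eq_or_ne t 0 with rfl | ht
    · rw [hasDerivAt_iff_tendsto_slope]
      have h1 : Tendsto (fun s : ℝ => |s| ^ (q - 2)) (nhds 0) (nhds 0) := by
        have hc : ContinuousAt (fun s : ℝ => s ^ (q - 2)) (|(0:ℝ)|) := by
          rw [abs_zero]; exact Real.continuousAt_rpow_const 0 (q - 2) (Or.inr (by linarith))
        have := hc.comp (continuous_abs.continuousAt (x := (0:ℝ)))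
        have h2 := this.tendsto
        simpa [Real.zero_rpow (by linarith : q - 2 ≠ 0), Function.comp_def] using h2
      have h3 : Tendsto (fun s : ℝ => |s| ^ (q - 2)) (nhdsWithin 0 {(0:ℝ)}ᶜ) (nhds 0) :=
        h1.mono_left nhdsWithin_le_nhds
    -- goal: slope tendsto (q-1)*|0|^(q-2) = 0
      have hz : (q - 1) * |(0:ℝ)| ^ (q - 2) = 0 := by
        simp [Real.zero_rpow (by linarith : q - 2 ≠ 0)]
      rw [hz]
      refine h3.congr' ?_
      filter_upwards [self_mem_nhdsWithin] with s hs
      have hs0 : s ≠ 0 := hs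
      rw [slope_def_field, Jmap_zero, Jmap]
      field_simp
      ring
    · exact hasDerivAt_Jmap q hq ht
  -- MVT on the segment
  have key : ‖Jmap q (x + y) - Jmap q x‖ ≤ ((q - 1) * (|x| + |y|) ^ (q - 2)) * ‖(x + y) - x‖ := by
    apply Convex.norm_image_sub_le_of_norm_hasDerivWithin_le
      (f' := fun t => (q - 1) * |t| ^ (q - 2)) (s := Set.uIcc x (x + y))
      (fun t _ => (hderiv t).hasDerivWithinAt) ?_ (convex_uIcc _ _)
      Set.left_mem_uIcc Set.right_mem_uIcc
    intro t ht
    have hx1 : -|x| ≤ x := neg_abs_le x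
    have hx2 : x ≤ |x| := le_abs_self x
    have hy1 : -|y| ≤ y := neg_abs_le y
    have hy2 : y ≤ |y| := le_abs_self y
    have habs : |t| ≤ |x| + |y| := by
      rcases Set.mem_uIcc.mp ht with ⟨h1, h2⟩ | ⟨h1, h2⟩ <;>
        (rw [abs_le]; constructor <;> linarith)
    rw [Real.norm_eq_abs, abs_mul, abs_of_nonneg (by linarith : (0:ℝ) ≤ q - 1),
      abs_of_nonneg (Real.rpow_nonneg (abs_nonneg t) _)]
    have := Real.rpow_le_rpow (abs_nonneg t) habs (by linarith : (0:ℝ) ≤ q - 2)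
    nlinarith [Real.rpow_nonneg (abs_nonneg t) (q-2)]
  rw [Real.norm_eq_abs, Real.norm_eq_abs, show x + y - x = y by ring] at key
  exact key

lemma rpow_sub_two_mul_self {q a : ℝ} (hq : 1 < q) (ha : 0 ≤ a) :
    a ^ (q - 2) * a = a ^ (q - 1) := by
  rcases eq_or_lt_of_le ha with rfl | ha
  · simp [Real.zero_rpow (by linarith : q - 1 ≠ 0)]
  · rw [← Real.rpow_add_one ha.ne']; ring_nf

/-- The key `ε`-inequality. -/
lemma Jmap_eps_ineq (q : ℝ) (hq : 1 < q) {ε : ℝ} (hε : 0 < ε) :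
    ∃ C : ℝ, 0 < C ∧ ∀ x y : ℝ,
      |Jmap q (x + y) - Jmap q x| ≤ ε * |x| ^ (q - 1) + C * |y| ^ (q - 1) := by
  rcases le_or_gt q 2 with hq2 | hq2
  · refine ⟨2, by norm_num, fun x y => ?_⟩
    have h := Jmap_sub_le_of_le_two q hq hq2 (x + y) x
    rw [show x + y - x = y by ring] at h
    have h1 : (0:ℝ) ≤ ε * |x| ^ (q - 1) :=
      mul_nonneg hε.le (Real.rpow_nonneg (abs_nonneg x) _)
    linarith
  · set K := (q - 1) * 2 ^ (q - 2) with hK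
    have hKpos : 0 < K := by
      apply mul_pos (by linarith)
      exact Real.rpow_pos_of_pos (by norm_num) _
    set δ := ε / K with hδ
    have hδpos : 0 < δ := div_pos hε hKpos
    refine ⟨K * (δ ^ (2 - q) + 1), by positivity, fun x y => ?_⟩
    have h := Jmap_sub_le_of_two_lt q hq2 x y
    have hx : (0:ℝ) ≤ |x| := abs_nonneg x
    have hy : (0:ℝ) ≤ |y| := abs_nonneg y
    have hq20 : (0:ℝ) ≤ q - 2 := by linarith
    -- (|x|+|y|)^(q-2) ≤ 2^(q-2) * (|x|^(q-2) + |y|^(q-2))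
    have h2 : (|x| + |y|) ^ (q - 2) ≤ 2 ^ (q - 2) * (|x| ^ (q - 2) + |y| ^ (q - 2)) := by
      have hmax : |x| + |y| ≤ 2 * max |x| |y| := by
        rcases max_cases |x| |y| with ⟨hm, _⟩ | ⟨hm, _⟩ <;> rw [hm] <;> linarith
      calc (|x| + |y|) ^ (q - 2) ≤ (2 * max |x| |y|) ^ (q - 2) :=
            Real.rpow_le_rpow (by linarith) hmax hq20
        _ = 2 ^ (q - 2) * (max |x| |y|) ^ (q - 2) :=
            Real.mul_rpow (by norm_num) (le_max_of_le_left hx)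
        _ ≤ 2 ^ (q - 2) * (|x| ^ (q - 2) + |y| ^ (q - 2)) := by
            gcongr
            rcases max_cases |x| |y| with ⟨hm, _⟩ | ⟨hm, _⟩ <;> rw [hm] <;>
              [skip; skip] <;>
              nlinarith [Real.rpow_nonneg hx (q-2), Real.rpow_nonneg hy (q-2)]
    -- |x|^(q-2) * |y| ≤ δ * |x|^(q-1) + δ^(2-q) * |y|^(q-1)
    have h3 : |x| ^ (q - 2) * |y| ≤ δ * |x| ^ (q - 1) + δ ^ (2 - q) * |y| ^ (q - 1) := by
      rcases le_or_gt |y| (δ * |x|) with hc | hc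
      · have : |x| ^ (q - 2) * |y| ≤ |x| ^ (q - 2) * (δ * |x|) := by
          apply mul_le_mul_of_nonneg_left hc (Real.rpow_nonneg hx _)
        calc |x| ^ (q - 2) * |y| ≤ δ * (|x| ^ (q - 2) * |x|) := by linarith [this]
          _ = δ * |x| ^ (q - 1) := by rw [rpow_sub_two_mul_self hq hx]
          _ ≤ δ * |x| ^ (q - 1) + δ ^ (2 - q) * |y| ^ (q - 1) := by
              have : (0:ℝ) ≤ δ ^ (2 - q) * |y| ^ (q - 1) := by positivity
              linarith
      · have hxlt : |x| ≤ |y| / δ := by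
          rw [le_div_iff₀ hδpos]; nlinarith
        have h4 : |x| ^ (q - 2) ≤ (|y| / δ) ^ (q - 2) :=
          Real.rpow_le_rpow hx hxlt hq20
        have h5 : (|y| / δ) ^ (q - 2) = |y| ^ (q - 2) * δ ^ (2 - q) := by
          rw [div_eq_mul_inv, Real.mul_rpow hy (by positivity), ← Real.rpow_neg_one δ,
            ← Real.rpow_mul hδpos.le, show (-1) * (q - 2) = 2 - q by ring]
        calc |x| ^ (q - 2) * |y| ≤ |y| ^ (q - 2) * δ ^ (2 - q) * |y| := by
              rw [← h5]; exact mul_le_mul_of_nonneg_right h4 hy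
          _ = δ ^ (2 - q) * (|y| ^ (q - 2) * |y|) := by ring
          _ = δ ^ (2 - q) * |y| ^ (q - 1) := by rw [rpow_sub_two_mul_self hq hy]
          _ ≤ δ * |x| ^ (q - 1) + δ ^ (2 - q) * |y| ^ (q - 1) := by
              have : (0:ℝ) ≤ δ * |x| ^ (q - 1) := by positivity
              linarith
    have hyy : |y| ^ (q - 2) * |y| = |y| ^ (q - 1) := rpow_sub_two_mul_self hq hy
    have hKδ : K * δ = ε := by rw [hδ]; field_simp [hKpos.ne']
    calc |Jmap q (x + y) - Jmap q x| ≤ (q - 1) * (|x| + |y|) ^ (q - 2) * |y| := h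
      _ ≤ (q - 1) * (2 ^ (q - 2) * (|x| ^ (q - 2) + |y| ^ (q - 2))) * |y| := by
          have : (0:ℝ) ≤ (q - 1) := by linarith
          nlinarith [h2, hy, mul_le_mul_of_nonneg_right h2 hy]
      _ = K * (|x| ^ (q - 2) * |y|) + K * (|y| ^ (q - 2) * |y|) := by rw [hK]; ring
      _ ≤ K * (δ * |x| ^ (q - 1) + δ ^ (2 - q) * |y| ^ (q - 1)) + K * |y| ^ (q - 1) := by
          rw [hyy]; have := mul_le_mul_of_nonneg_left h3 hKpos.le; linarith
      _ = ε * |x| ^ (q - 1) + K * (δ ^ (2 - q) + 1) * |y| ^ (q - 1) := by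
          rw [← hKδ]; ring


/-- Nonlinear Brezis–Lieb lemma: if `1 < q < ∞`, `{f_n}` is bounded in `L^q(ℝ^d)` and
`f_n → f` a.e., then `J_q(f_n) - J_q(f_n - f) → J_q(f)` strongly in `L^{q'}(ℝ^d)`,
where `q' = q/(q-1)`. -/
theorem nonlinear_brezis_lieb (d : ℕ) (q : ℝ) (hq : 1 < q)
    (f : ℕ → EuclideanSpace ℝ (Fin d) → ℝ) (f₀ : EuclideanSpace ℝ (Fin d) → ℝ)
    (hmem : ∀ n, MemLp (f n) (ENNReal.ofReal q) volume)
    (hbdd : ∃ M : ℝ, ∀ n, eLpNorm (f n) (ENNReal.ofReal q) volume ≤ ENNReal.ofReal M)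
    (hae : ∀ᵐ x : EuclideanSpace ℝ (Fin d), Tendsto (fun n => f n x) atTop (nhds (f₀ x))) :
    Tendsto (fun n => eLpNorm
        (fun x => Jmap q (f n x) - Jmap q (f n x - f₀ x) - Jmap q (f₀ x))
        (ENNReal.ofReal (q / (q - 1))) volume)
      atTop (nhds 0) := by
  obtain ⟨M, hM⟩ := hbdd
  set μ : Measure (EuclideanSpace ℝ (Fin d)) := volume with hμ
  set p := ENNReal.ofReal q with hp
  set r := ENNReal.ofReal (q / (q - 1)) with hr
  have hq1 : (0:ℝ) < q - 1 := by linarith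
  have hq0 : (0:ℝ) < q := by linarith
  set q' : ℝ := q / (q - 1) with hq'def
  have hq' : (1:ℝ) < q' := (one_lt_div hq1).mpr (by linarith)
  have hq'0 : (0:ℝ) < q' := by linarith
  have hr1 : 1 ≤ r := ENNReal.one_le_ofReal.mpr hq'.le
  have hr0 : r ≠ 0 := by
    intro h; rw [hr, ENNReal.ofReal_eq_zero] at h; linarith
  have hrtop : r ≠ ∞ := ENNReal.ofReal_ne_top
  have hrq' : r.toReal = q' := ENNReal.toReal_ofReal hq'0.le
  have hp1 : 1 ≤ p := ENNReal.one_le_ofReal.mpr hq.le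
  have hp0 : p ≠ 0 := by
    intro h; rw [hp, ENNReal.ofReal_eq_zero] at h; linarith
  have hptop : p ≠ ∞ := ENNReal.ofReal_ne_top
  have hpq : p.toReal = q := ENNReal.toReal_ofReal hq0.le
  -- measurability
  have hfm : ∀ n, AEStronglyMeasurable (f n) μ := fun n => (hmem n).aestronglyMeasurable
  have hf₀m : AEStronglyMeasurable f₀ μ := aestronglyMeasurable_of_tendsto_ae atTop hfm hae
  have hJc : Continuous (Jmap q) := continuous_Jmap q hq
  have hcont1 : Continuous (fun t : ℝ => |t| ^ (q - 1)) :=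
    (Real.continuous_rpow_const (by linarith)).comp continuous_abs
  -- f₀ ∈ L^q
  have hf₀le : eLpNorm f₀ p μ ≤ ENNReal.ofReal M := by
    refine le_trans (Lp.eLpNorm_lim_le_liminf_eLpNorm hfm f₀ hae) ?_
    refine le_trans (liminf_le_limsup) ?_
    exact limsup_le_of_le (by isBoundedDefault) (Eventually.of_forall hM)
  have hf₀top : eLpNorm f₀ p μ ≠ ∞ :=
    ne_top_of_le_ne_top ENNReal.ofReal_ne_top hf₀le
  -- the function g
  set g : ℕ → EuclideanSpace ℝ (Fin d) → ℝ :=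
    fun n x => Jmap q (f n x) - Jmap q (f n x - f₀ x) - Jmap q (f₀ x) with hg
  have hgm : ∀ n, AEStronglyMeasurable (g n) μ := fun n =>
    ((hJc.comp_aestronglyMeasurable (hfm n)).sub
      (hJc.comp_aestronglyMeasurable ((hfm n).sub hf₀m))).sub
      (hJc.comp_aestronglyMeasurable hf₀m)
  -- difference bounded in L^q
  set Kq : ℝ≥0∞ := ENNReal.ofReal M + eLpNorm f₀ p μ with hKq
  have hKqtop : Kq ≠ ∞ := by
    rw [hKq]; exact ENNReal.add_ne_top.mpr ⟨ENNReal.ofReal_ne_top, hf₀top⟩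
  have hKqle : ∀ n, eLpNorm (fun x => f n x - f₀ x) p μ ≤ Kq := fun n => by
    refine le_trans (eLpNorm_sub_le (hfm n) hf₀m hp1) ?_
    exact add_le_add (hM n) le_rfl
  set Kpow : ℝ≥0∞ := Kq ^ (q - 1) + 1 with hKpow
  have hKpow0 : Kpow ≠ 0 := by
    rw [hKpow]; exact (lt_of_lt_of_le zero_lt_one le_add_self).ne'
  have hKpowtop : Kpow ≠ ∞ := by
    rw [hKpow]
    exact ENNReal.add_ne_top.mpr ⟨ENNReal.rpow_ne_top_of_nonneg hq1.le hKqtop, ENNReal.one_ne_top⟩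
  -- a.e. convergences
  have haes : ∀ᵐ x ∂μ, Tendsto (fun n => f n x - f₀ x) atTop (nhds 0) := by
    filter_upwards [hae] with x hx
    have := hx.sub (tendsto_const_nhds (x := f₀ x))
    rwa [sub_self] at this
  have hgtendsto : ∀ᵐ x ∂μ, Tendsto (fun n => g n x) atTop (nhds 0) := by
    filter_upwards [hae, haes] with x hx hx'
    have h1 : Tendsto (fun n => Jmap q (f n x)) atTop (nhds (Jmap q (f₀ x))) :=
      (hJc.continuousAt.tendsto).comp hx
    have h2 : Tendsto (fun n => Jmap q (f n x - f₀ x)) atTop (nhds (Jmap q 0)) :=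
      (hJc.continuousAt.tendsto).comp hx'
    have h3 := (h1.sub h2).sub (tendsto_const_nhds (x := Jmap q (f₀ x)))
    simpa [hg, Jmap_zero] using h3
  -- main argument
  rw [ENNReal.tendsto_atTop_zero]
  intro ε₀ hε₀
  set δ : ℝ≥0∞ := ε₀ / 2 with hδ
  have hδ0 : δ ≠ 0 := by
    rw [hδ]
    simp only [ne_eq, ENNReal.div_eq_zero_iff, not_or]
    exact ⟨hε₀.ne', by norm_num⟩
  -- choose ε
  set εE : ℝ≥0∞ := (min δ 1) / Kpow with hεE
  have hεEtop : εE ≠ ∞ := by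
    rw [hεE]
    exact (ENNReal.div_lt_top (ne_top_of_le_ne_top ENNReal.one_ne_top (min_le_right _ _))
      hKpow0).ne
  have hεE0 : εE ≠ 0 := by
    rw [hεE]
    simp only [ne_eq, ENNReal.div_eq_zero_iff, not_or]
    refine ⟨?_, hKpowtop⟩
    exact (lt_min (zero_lt_iff.mpr hδ0) zero_lt_one).ne'
  set ε : ℝ := εE.toReal with hε
  have hεpos : 0 < ε := ENNReal.toReal_pos hεE0 hεEtop
  have hofReal : ENNReal.ofReal ε = εE := ENNReal.ofReal_toReal hεEtop
  have hεK : ENNReal.ofReal ε * Kpow ≤ δ := by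
    rw [hofReal, hεE, ENNReal.div_mul_cancel hKpow0 hKpowtop]
    exact min_le_left _ _
  obtain ⟨C, hC, hCkey⟩ := Jmap_eps_ineq q hq hεpos
  -- the truncated functions
  set W : ℕ → EuclideanSpace ℝ (Fin d) → ℝ :=
    fun n x => max (|g n x| - ε * |f n x - f₀ x| ^ (q - 1)) 0 with hW
  have hWnonneg : ∀ n x, 0 ≤ W n x := fun n x => le_max_right _ _
  have hWm : ∀ n, AEStronglyMeasurable (W n) μ := by
    intro n
    have h1 : AEStronglyMeasurable
        (fun x => |g n x| - ε * |f n x - f₀ x| ^ (q - 1)) μ :=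
      (continuous_abs.comp_aestronglyMeasurable (hgm n)).sub
        ((hcont1.comp_aestronglyMeasurable ((hfm n).sub hf₀m)).const_mul ε)
    rw [aestronglyMeasurable_iff_aemeasurable]
    exact h1.aemeasurable.sup aemeasurable_const
  -- pointwise bounds
  have hg_bound : ∀ n x, |g n x| ≤ ε * |f n x - f₀ x| ^ (q - 1) + (C + 1) * |f₀ x| ^ (q - 1) := by
    intro n x
    have h1 := hCkey (f n x - f₀ x) (f₀ x)
    rw [show f n x - f₀ x + f₀ x = f n x by ring] at h1
    have h2 : |g n x| ≤ |Jmap q (f n x) - Jmap q (f n x - f₀ x)| + |Jmap q (f₀ x)| := by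
      rw [hg]
      exact abs_sub _ _
    rw [abs_Jmap q hq (f₀ x)] at h2
    linarith
  have hW_le : ∀ n x, W n x ≤ (C + 1) * |f₀ x| ^ (q - 1) := by
    intro n x
    refine max_le ?_ (by positivity)
    have := hg_bound n x
    linarith
  have hg_le : ∀ n x, |g n x| ≤ W n x + ε * |f n x - f₀ x| ^ (q - 1) := by
    intro n x
    have h1 : |g n x| - ε * |f n x - f₀ x| ^ (q - 1) ≤ W n x := le_max_left _ _
    linarith
  -- split estimate
  have hsplit : ∀ n, eLpNorm (g n) r μ ≤ eLpNorm (W n) r μ + δ := by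
    intro n
    have h1 : eLpNorm (g n) r μ ≤
        eLpNorm (fun x => W n x + ε * |f n x - f₀ x| ^ (q - 1)) r μ := by
      refine eLpNorm_mono_real (fun x => ?_)
      rw [Real.norm_eq_abs]
      exact hg_le n x
    have hu : AEStronglyMeasurable (fun x => ε * |f n x - f₀ x| ^ (q - 1)) μ :=
      (hcont1.comp_aestronglyMeasurable ((hfm n).sub hf₀m)).const_mul ε
    have h2 : eLpNorm (fun x => W n x + ε * |f n x - f₀ x| ^ (q - 1)) r μ ≤
        eLpNorm (W n) r μ + eLpNorm (fun x => ε * |f n x - f₀ x| ^ (q - 1)) r μ :=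
      eLpNorm_add_le (hWm n) hu hr1
    have h3 : eLpNorm (fun x => ε * |f n x - f₀ x| ^ (q - 1)) r μ ≤ δ := by
      have h4 : eLpNorm (fun x => ε * |f n x - f₀ x| ^ (q - 1)) r μ ≤
          (‖ε‖₊ : ℝ≥0∞) * eLpNorm (fun x => |f n x - f₀ x| ^ (q - 1)) r μ := by
        have := eLpNorm_const_smul_le (c := ε)
          (f := fun x => |f n x - f₀ x| ^ (q - 1)) (p := r) (μ := μ)
        exact this
      have h5 : eLpNorm (fun x => |f n x - f₀ x| ^ (q - 1)) r μ =
          eLpNorm (fun x => f n x - f₀ x) (r * ENNReal.ofReal (q - 1)) μ ^ (q - 1) := by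
        have := eLpNorm_norm_rpow (fun x => f n x - f₀ x) (μ := μ) (p := r) hq1
        simpa [Real.norm_eq_abs] using this
      have h6 : r * ENNReal.ofReal (q - 1) = p := by
        rw [hr, hp, ← ENNReal.ofReal_mul (by positivity)]
        congr 1
        rw [hq'def]
        field_simp
      rw [h5, h6] at h4
      have h7 : eLpNorm (fun x => f n x - f₀ x) p μ ^ (q - 1) ≤ Kpow := by
        rw [hKpow]
        refine le_trans (ENNReal.rpow_le_rpow (hKqle n) hq1.le) ?_
        exact le_self_add
      calc eLpNorm (fun x => ε * |f n x - f₀ x| ^ (q - 1)) r μ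
          ≤ (‖ε‖₊ : ℝ≥0∞) * Kpow := by
            refine le_trans h4 ?_
            exact mul_le_mul_right h7 _
        _ = ENNReal.ofReal ε * Kpow := by rw [← enorm_eq_nnnorm, Real.enorm_eq_ofReal hεpos.le]
        _ ≤ δ := hεK
    calc eLpNorm (g n) r μ ≤ eLpNorm (W n) r μ +
          eLpNorm (fun x => ε * |f n x - f₀ x| ^ (q - 1)) r μ := le_trans h1 h2
      _ ≤ eLpNorm (W n) r μ + δ := add_le_add_right h3 _
  -- W → 0 in L^{q'} via dominated convergence
  set F : ℕ → EuclideanSpace ℝ (Fin d) → ℝ≥0∞ :=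
    fun n x => ENNReal.ofReal ((W n x) ^ q') with hF
  have hWsnorm : ∀ n, eLpNorm (W n) r μ = (∫⁻ x, F n x ∂μ) ^ (1 / q') := by
    intro n
    rw [eLpNorm_eq_lintegral_rpow_enorm_toReal hr0 hrtop, hrq']
    congr 1
    refine lintegral_congr (fun x => ?_)
    simp only [hF]
    rw [← ENNReal.ofReal_rpow_of_nonneg (hWnonneg n x) hq'0.le,
      Real.enorm_eq_ofReal_abs, abs_of_nonneg (hWnonneg n x)]
  set bound : EuclideanSpace ℝ (Fin d) → ℝ≥0∞ :=
    fun x => ENNReal.ofReal (((C + 1) * |f₀ x| ^ (q - 1)) ^ q') with hbound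
  have hb_fin : ∫⁻ x, bound x ∂μ ≠ ∞ := by
    have hbeq : ∀ x, bound x =
        ENNReal.ofReal ((C + 1) ^ q') * ENNReal.ofReal (|f₀ x| ^ q) := by
      intro x
      simp only [hbound]
      rw [Real.mul_rpow (by positivity) (by positivity),
        ← Real.rpow_mul (abs_nonneg _), show (q - 1) * q' = q by rw [hq'def]; field_simp,
        ENNReal.ofReal_mul (by positivity)]
    have hI : ∫⁻ x, ENNReal.ofReal (|f₀ x| ^ q) ∂μ = eLpNorm f₀ p μ ^ q := by
      have h1 : ∀ x, ENNReal.ofReal (|f₀ x| ^ q) = ‖f₀ x‖ₑ ^ q := fun x => by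
        rw [← ENNReal.ofReal_rpow_of_nonneg (abs_nonneg _) hq0.le,
          Real.enorm_eq_ofReal_abs]
      rw [lintegral_congr h1, eLpNorm_eq_lintegral_rpow_enorm_toReal hp0 hptop, hpq,
        ← ENNReal.rpow_mul, one_div, inv_mul_cancel₀ hq0.ne', ENNReal.rpow_one]
    rw [lintegral_congr hbeq, lintegral_const_mul' _ _ ENNReal.ofReal_ne_top]
    refine ENNReal.mul_ne_top ENNReal.ofReal_ne_top ?_
    rw [hI]
    exact ENNReal.rpow_ne_top_of_nonneg hq0.le hf₀top
  -- dominated convergence for F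
  have hF_meas : ∀ n, AEMeasurable (F n) μ := by
    intro n
    simp only [hF]
    have h1 : AEMeasurable (W n) μ := (hWm n).aemeasurable
    exact (ENNReal.measurable_ofReal.comp
      (Real.continuous_rpow_const hq'0.le).measurable).comp_aemeasurable h1
  have hF_bound : ∀ n, F n ≤ᵐ[μ] bound := by
    intro n
    refine Eventually.of_forall (fun x => ?_)
    simp only [hF, hbound]
    exact ENNReal.ofReal_le_ofReal
      (Real.rpow_le_rpow (hWnonneg n x) (hW_le n x) hq'0.le)
  have hF_lim : ∀ᵐ x ∂μ, Tendsto (fun n => F n x) atTop (nhds 0) := by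
    filter_upwards [hgtendsto, haes] with x hx hx'
    have hWx : Tendsto (fun n => W n x) atTop (nhds 0) := by
      have h1 : Tendsto (fun n => |g n x|) atTop (nhds 0) := by
        have := (continuous_abs.continuousAt (x := (0:ℝ))).tendsto.comp hx
        simpa [Function.comp_def] using this
      have h2 : Tendsto (fun n => ε * |f n x - f₀ x| ^ (q - 1)) atTop (nhds 0) := by
        have h3 := (hcont1.continuousAt (x := (0:ℝ))).tendsto.comp hx'
        have h4 : (|(0:ℝ)| ^ (q - 1)) = 0 := by
          simp [Real.zero_rpow (by linarith : q - 1 ≠ 0)]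
        rw [h4] at h3
        simpa using h3.const_mul ε
      have h5 := (h1.sub h2).max (tendsto_const_nhds (x := (0:ℝ)) (f := atTop))
      simpa [hW] using h5
    have h6 : Tendsto (fun n => (W n x) ^ q') atTop (nhds 0) := by
      have := ((Real.continuousAt_rpow_const 0 q' (Or.inr hq'0.le)).tendsto).comp hWx
      simpa [Real.zero_rpow hq'0.ne', Function.comp_def] using this
    have h7 := (ENNReal.continuous_ofReal.continuousAt.tendsto).comp h6
    simpa [hF, Function.comp_def] using h7
  have hlint : Tendsto (fun n => ∫⁻ x, F n x ∂μ) atTop (nhds 0) := by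
    have := tendsto_lintegral_of_dominated_convergence' bound hF_meas hF_bound hb_fin
      (by filter_upwards [hF_lim] with x hx; simpa using hx)
    simpa using this
  -- hence eLpNorm (W n) r → 0
  have hWtendsto : Tendsto (fun n => eLpNorm (W n) r μ) atTop (nhds 0) := by
    rw [ENNReal.tendsto_atTop_zero]
    intro η hη
    rcases eq_or_ne η ⊤ with rfl | hηtop
    · exact ⟨0, fun n _ => le_top⟩
    have hη' : (0:ℝ≥0∞) < η ^ q' := ENNReal.rpow_pos hη hηtop
    obtain ⟨N, hN⟩ := (ENNReal.tendsto_atTop_zero.mp hlint) (η ^ q') hη'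
    refine ⟨N, fun n hn => ?_⟩
    rw [hWsnorm n]
    calc (∫⁻ x, F n x ∂μ) ^ (1 / q') ≤ (η ^ q') ^ (1 / q') :=
          ENNReal.rpow_le_rpow (hN n hn) (by positivity)
      _ = η := by
          rw [← ENNReal.rpow_mul, mul_one_div, div_self hq'0.ne', ENNReal.rpow_one]
  -- conclusion
  obtain ⟨N, hN⟩ := (ENNReal.tendsto_atTop_zero.mp hWtendsto) δ (zero_lt_iff.mpr hδ0)
  refine ⟨N, fun n hn => ?_⟩
  calc eLpNorm (g n) r μ ≤ eLpNorm (W n) r μ + δ := hsplit n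
    _ ≤ δ + δ := add_le_add_left (hN n hn) δ
    _ = ε₀ := by rw [hδ, ENNReal.add_halves]
end

section
/- If u_n ⇀ u weakly in D^{s,p}(R^d) and u_n → u a.e., then the Gagliardo seminorms split: ||u_n||_{D^{s,p}}^p − ||u_n − u||_{D^{s,p}}^p → ||u||_{D^{s,p}}^p. -/
open MeasureTheory Filter

section BrezisLiebAux
open Real

set_option linter.unusedVariables false

lemma rpow_sub_one_mul_self {p x : ℝ} (hp : 0 < p) (hx : 0 ≤ x) :
    x ^ (p - 1) * x = x ^ p := by
  rcases eq_or_lt_of_le hx with h | h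
  · rw [← h, Real.zero_rpow (ne_of_gt hp), mul_zero]
  · rw [← Real.rpow_add_one (ne_of_gt h), sub_add_cancel]

lemma bl_tangent {p a b : ℝ} (hp : 1 < p) (ha : 0 < a) (hb : 0 ≤ b) :
    a ^ p + p * a ^ (p - 1) * (b - a) ≤ b ^ p := by
  have hs : (-1:ℝ) ≤ b / a - 1 := by
    have : (0:ℝ) ≤ b / a := div_nonneg hb ha.le
    linarith
  have h := one_add_mul_self_le_rpow_one_add hs hp.le
  have h2 : ((1:ℝ) + (b / a - 1)) ^ p = b ^ p / a ^ p := by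
    rw [show (1:ℝ) + (b/a - 1) = b / a by ring, Real.div_rpow hb ha.le]
  rw [h2] at h
  have hap : (0:ℝ) < a ^ p := Real.rpow_pos_of_pos ha p
  have h3 := mul_le_mul_of_nonneg_left h hap.le
  have h4 : a ^ p * (b ^ p / a ^ p) = b ^ p := by field_simp
  rw [h4] at h3
  have hmul : a ^ (p - 1) * a = a ^ p := rpow_sub_one_mul_self (lt_trans one_pos hp) ha.le
  have hane : a ≠ 0 := ne_of_gt ha
  have heq : a ^ p * (1 + p * (b / a - 1)) = a ^ p + p * a ^ (p - 1) * (b - a) := by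
    rw [← hmul]; field_simp
  linarith [h3, heq.symm.le, heq.le]

lemma bl_abs_diff {p : ℝ} (hp : 1 < p) {a b : ℝ} (ha : 0 ≤ a) (hb : 0 ≤ b) :
    |a ^ p - b ^ p| ≤ p * (a + b) ^ (p - 1) * |a - b| := by
  have hp0 : (0:ℝ) < p := lt_trans one_pos hp
  -- wlog via a helper for the ordered case
  have key : ∀ x y : ℝ, 0 ≤ y → y ≤ x → x ^ p - y ^ p ≤ p * (x + y) ^ (p-1) * (x - y) := by
    intro x y hy hyx
    have hx : 0 ≤ x := le_trans hy hyx
    rcases eq_or_lt_of_le hx with h | h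
    · have hx0 : x = 0 := h.symm
      have hy0 : y = 0 := le_antisymm (hx0 ▸ hyx) hy
      simp [hx0, hy0, Real.zero_rpow (ne_of_gt hp0)]
    · have := bl_tangent hp h hy
      have h1 : x ^ p - y ^ p ≤ p * x ^ (p-1) * (x - y) := by nlinarith
      refine le_trans h1 ?_
      have h2 : x ^ (p-1) ≤ (x + y) ^ (p-1) :=
        Real.rpow_le_rpow hx (by linarith) (by linarith)
      have hxy : (0:ℝ) ≤ x - y := by linarith
      exact mul_le_mul_of_nonneg_right (mul_le_mul_of_nonneg_left h2 hp0.le) hxy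
  rcases le_total b a with h | h
  · rw [abs_of_nonneg (by nlinarith [Real.rpow_le_rpow hb h hp0.le] : (0:ℝ) ≤ a ^ p - b ^ p),
      abs_of_nonneg (by linarith : (0:ℝ) ≤ a - b)]
    exact key a b hb h
  · rw [abs_sub_comm, abs_sub_comm a b,
      abs_of_nonneg (by nlinarith [Real.rpow_le_rpow ha h hp0.le] : (0:ℝ) ≤ b ^ p - a ^ p),
      abs_of_nonneg (by linarith : (0:ℝ) ≤ b - a)]
    have := key b a ha h
    calc b ^ p - a ^ p ≤ p * (b + a) ^ (p-1) * (b - a) := this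
    _ = p * (a + b) ^ (p-1) * (b - a) := by rw [add_comm]

lemma bl_two_pow {p : ℝ} (hp0 : 0 < p) (x y : ℝ) :
    |x - y| ^ p ≤ 2 ^ p * (|x| ^ p + |y| ^ p) := by
  have h1 : |x - y| ≤ 2 * max |x| |y| := by
    refine le_trans (abs_sub _ _) ?_
    have := le_max_left |x| |y|; have := le_max_right |x| |y|; linarith
  have h2 : |x - y| ^ p ≤ (2 * max |x| |y|) ^ p :=
    Real.rpow_le_rpow (abs_nonneg _) h1 hp0.le
  have hm : (0:ℝ) ≤ max |x| |y| := le_trans (abs_nonneg x) (le_max_left _ _)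
  rw [Real.mul_rpow (by norm_num) hm] at h2
  refine le_trans h2 ?_
  have h3 : max |x| |y| ^ p ≤ |x| ^ p + |y| ^ p := by
    rcases max_cases |x| |y| with ⟨h, _⟩ | ⟨h, _⟩ <;> rw [h] <;>
      [nlinarith [Real.rpow_nonneg (abs_nonneg y) p];
       nlinarith [Real.rpow_nonneg (abs_nonneg x) p]]
  have h2p : (0:ℝ) ≤ 2 ^ p := Real.rpow_nonneg (by norm_num) p
  nlinarith
lemma bl_eps {p : ℝ} (hp : 1 < p) {ε : ℝ} (hε : 0 < ε) :
    ∃ C : ℝ, 0 < C ∧ ∀ a b : ℝ, abs (|a + b| ^ p - |a| ^ p) ≤ ε * |a| ^ p + C * |b| ^ p := by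
  have hp0 : (0:ℝ) < p := lt_trans one_pos hp
  have h3 : (0:ℝ) < p * 3 ^ (p-1) := mul_pos hp0 (Real.rpow_pos_of_pos (by norm_num) _)
  set δ : ℝ := min 1 (ε / (p * 3 ^ (p-1))) with hδdef
  have hδ : 0 < δ := lt_min one_pos (div_pos hε h3)
  have hδ1 : δ ≤ 1 := min_le_left _ _
  refine ⟨p * (2/δ + 1) ^ (p-1) + 1, by positivity, fun a b => ?_⟩
  have habs : abs (|a + b| - |a|) ≤ |b| := by
    have := abs_abs_sub_abs_le_abs_sub (a + b) a
    simpa using this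
  have hT : abs (|a+b| ^ p - |a| ^ p) ≤ p * (2 * |a| + |b|) ^ (p-1) * |b| := by
    refine le_trans (bl_abs_diff hp (abs_nonneg _) (abs_nonneg _)) ?_
    have hsum : |a + b| + |a| ≤ 2 * |a| + |b| := by
      have := abs_add_le a b; linarith [abs_nonneg a]
    have hr : (|a+b| + |a|) ^ (p-1) ≤ (2 * |a| + |b|) ^ (p-1) :=
      Real.rpow_le_rpow (by positivity) hsum (by linarith)
    have h1 : p * (|a+b| + |a|) ^ (p-1) * (abs (|a+b| - |a|)) ≤ p * (2*|a|+|b|) ^ (p-1) * (abs (|a+b| - |a|)) :=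
      mul_le_mul_of_nonneg_right (mul_le_mul_of_nonneg_left hr hp0.le) (abs_nonneg _)
    refine le_trans h1 (mul_le_mul_of_nonneg_left habs (by positivity))
  rcases le_or_gt |b| (δ * |a|) with h | h
  · -- small b case
    have ha0 : (0:ℝ) ≤ |a| := abs_nonneg a
    have hb0 : (0:ℝ) ≤ |b| := abs_nonneg b
    have hsum : 2 * |a| + |b| ≤ 3 * |a| := by nlinarith
    have hr : (2*|a|+|b|) ^ (p-1) ≤ (3*|a|) ^ (p-1) :=
      Real.rpow_le_rpow (by positivity) hsum (by linarith)
    have hmr : (3*|a|) ^ (p-1) = 3 ^ (p-1) * |a| ^ (p-1) :=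
      Real.mul_rpow (by norm_num) ha0
    have hchain : p * (2*|a|+|b|) ^ (p-1) * |b| ≤ p * 3 ^ (p-1) * |a| ^ (p-1) * (δ * |a|) := by
      have h1 : p * (2*|a|+|b|) ^ (p-1) * |b| ≤ p * (3*|a|) ^ (p-1) * |b| :=
        mul_le_mul_of_nonneg_right (mul_le_mul_of_nonneg_left hr hp0.le) hb0
      have h2 : p * (3*|a|) ^ (p-1) * |b| ≤ p * (3*|a|) ^ (p-1) * (δ * |a|) :=
        mul_le_mul_of_nonneg_left h (by positivity)
      rw [hmr] at h2
      calc p * (2*|a|+|b|) ^ (p-1) * |b| ≤ p * (3*|a|) ^ (p-1) * |b| := h1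
        _ ≤ p * 3 ^ (p-1) * |a| ^ (p-1) * (δ * |a|) := by rw [hmr]; linarith [h2]
    have hself : |a| ^ (p-1) * |a| = |a| ^ p := rpow_sub_one_mul_self hp0 ha0
    have hδε : p * 3 ^ (p-1) * δ ≤ ε := by
      have : δ ≤ ε / (p * 3 ^ (p-1)) := min_le_right _ _
      calc p * 3 ^ (p-1) * δ ≤ p * 3 ^ (p-1) * (ε / (p * 3 ^ (p-1))) :=
            mul_le_mul_of_nonneg_left this h3.le
        _ = ε := by field_simp
    have hfin : p * 3 ^ (p-1) * |a| ^ (p-1) * (δ * |a|) ≤ ε * |a| ^ p := by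
      have : p * 3 ^ (p-1) * |a| ^ (p-1) * (δ * |a|) = (p * 3 ^ (p-1) * δ) * (|a| ^ (p-1) * |a|) := by
        ring
      rw [this, hself]
      exact mul_le_mul_of_nonneg_right hδε (Real.rpow_nonneg ha0 p)
    have hC : (0:ℝ) ≤ (p * (2/δ + 1) ^ (p-1) + 1) * |b| ^ p := by positivity
    linarith [le_trans hT (le_trans hchain hfin)]
  · -- large b case
    have ha0 : (0:ℝ) ≤ |a| := abs_nonneg a
    have hb0 : (0:ℝ) ≤ |b| := abs_nonneg b
    have hab : |a| ≤ |b| / δ := by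
      rw [le_div_iff₀ hδ]; nlinarith
    have hsum : 2 * |a| + |b| ≤ (2/δ + 1) * |b| := by
      have h2 : 2 * |a| ≤ 2 * (|b| / δ) := by linarith
      have : 2 * (|b|/δ) = (2/δ) * |b| := by ring
      linarith [this]
    have hr : (2*|a|+|b|) ^ (p-1) ≤ ((2/δ+1) * |b|) ^ (p-1) :=
      Real.rpow_le_rpow (by positivity) hsum (by linarith)
    have hmr : ((2/δ+1) * |b|) ^ (p-1) = (2/δ+1) ^ (p-1) * |b| ^ (p-1) :=
      Real.mul_rpow (by positivity) hb0
    have hself : |b| ^ (p-1) * |b| = |b| ^ p := rpow_sub_one_mul_self hp0 hb0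
    have hchain : p * (2*|a|+|b|) ^ (p-1) * |b| ≤ p * (2/δ+1) ^ (p-1) * |b| ^ p := by
      have h1 : p * (2*|a|+|b|) ^ (p-1) * |b| ≤ p * ((2/δ+1)*|b|) ^ (p-1) * |b| :=
        mul_le_mul_of_nonneg_right (mul_le_mul_of_nonneg_left hr hp0.le) hb0
      rw [hmr] at h1
      calc p * (2*|a|+|b|) ^ (p-1) * |b| ≤ p * ((2/δ+1) ^ (p-1) * |b| ^ (p-1)) * |b| := h1
        _ = p * (2/δ+1) ^ (p-1) * (|b| ^ (p-1) * |b|) := by ring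
        _ = p * (2/δ+1) ^ (p-1) * |b| ^ p := by rw [hself]
    have hεa : (0:ℝ) ≤ ε * |a| ^ p := by positivity
    have hbp : (0:ℝ) ≤ |b| ^ p := Real.rpow_nonneg hb0 p
    nlinarith [le_trans hT hchain]

lemma aesm_abs_rpow {α : Type*} [MeasurableSpace α] {μ : Measure α} {f : α → ℝ}
    (hf : AEStronglyMeasurable f μ) (p : ℝ) :
    AEStronglyMeasurable (fun x => |f x| ^ p) μ :=
  ((measurable_abs.comp_aemeasurable hf.aemeasurable).pow aemeasurable_const).aestronglyMeasurable

lemma brezisLieb {α : Type*} [MeasurableSpace α] {μ : Measure α} {p : ℝ} (hp : 1 < p)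
    (f : ℕ → α → ℝ) (f₀ : α → ℝ)
    (hm : ∀ n, AEStronglyMeasurable (f n) μ) (hm0 : AEStronglyMeasurable f₀ μ)
    (hint : ∀ n, Integrable (fun x => |f n x| ^ p) μ)
    (hint0 : Integrable (fun x => |f₀ x| ^ p) μ)
    {M : ℝ} (hM : ∀ n, (∫ x, |f n x| ^ p ∂μ) ≤ M)
    (hae : ∀ᵐ x ∂μ, Tendsto (fun n => f n x) atTop (nhds (f₀ x))) :
    Tendsto (fun n => (∫ x, |f n x| ^ p ∂μ) - ∫ x, |f n x - f₀ x| ^ p ∂μ) atTop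
      (nhds (∫ x, |f₀ x| ^ p ∂μ)) := by
  have hp0 : (0:ℝ) < p := lt_trans one_pos hp
  set I₀ := ∫ x, |f₀ x| ^ p ∂μ with hI₀
  have hintg : ∀ n, Integrable (fun x => |f n x - f₀ x| ^ p) μ := by
    intro n
    refine Integrable.mono' (((hint n).add hint0).const_mul ((2:ℝ) ^ p))
      (aesm_abs_rpow ((hm n).sub hm0) p) (Filter.Eventually.of_forall fun x => ?_)
    rw [Real.norm_eq_abs, abs_of_nonneg (Real.rpow_nonneg (abs_nonneg _) _)]
    exact (bl_two_pow hp0 _ _).trans (le_of_eq (by simp))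
  have hI0nn : 0 ≤ I₀ := integral_nonneg fun x => Real.rpow_nonneg (abs_nonneg _) _
  have hBnn : ∀ n, 0 ≤ ∫ x, |f n x - f₀ x| ^ p ∂μ := fun n =>
    integral_nonneg fun x => Real.rpow_nonneg (abs_nonneg _) _
  set K := (2:ℝ) ^ p * (M + I₀) with hK
  have hBle : ∀ n, (∫ x, |f n x - f₀ x| ^ p ∂μ) ≤ K := by
    intro n
    have h1 : (∫ x, |f n x - f₀ x| ^ p ∂μ) ≤ ∫ x, (2:ℝ) ^ p * (|f n x| ^ p + |f₀ x| ^ p) ∂μ :=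
      integral_mono (hintg n) (((hint n).add hint0).const_mul _) (fun x => bl_two_pow hp0 _ _)
    rw [integral_const_mul, integral_add (hint n) hint0] at h1
    have h2p : (0:ℝ) ≤ 2 ^ p := Real.rpow_nonneg (by norm_num) p
    nlinarith [h1, hM n]
  have hKnn : 0 ≤ K := le_trans (hBnn 0) (hBle 0)
  have main : Tendsto (fun n => (∫ x, |f n x| ^ p ∂μ) - (∫ x, |f n x - f₀ x| ^ p ∂μ) - I₀)
      atTop (nhds 0) := by
    rw [NormedAddCommGroup.tendsto_nhds_zero]
    intro ε' hε'
    set ε := ε' / (2 * (K + 1)) with hε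
    have hεpos : 0 < ε := by positivity
    obtain ⟨C, hC, hCineq⟩ := bl_eps hp hεpos
    set w : ℕ → α → ℝ := fun n x => |f n x| ^ p - |f n x - f₀ x| ^ p - |f₀ x| ^ p with hwdef
    set h : ℕ → α → ℝ := fun n x => max (|w n x| - ε * |f n x - f₀ x| ^ p) 0 with hhdef
    have hwint : ∀ n, Integrable (w n) μ := fun n => ((hint n).sub (hintg n)).sub hint0
    have hhint : ∀ n, Integrable (h n) μ := fun n =>
      ((hwint n).abs.sub ((hintg n).const_mul ε)).pos_part
    have hhle : ∀ n x, h n x ≤ (C + 1) * |f₀ x| ^ p := by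
      intro n x
      have key := hCineq (f n x - f₀ x) (f₀ x)
      rw [sub_add_cancel] at key
      have h1 : |w n x| ≤ abs (|f n x| ^ p - |f n x - f₀ x| ^ p) + |f₀ x| ^ p := by
        have h2 := abs_sub (|f n x| ^ p - |f n x - f₀ x| ^ p) (|f₀ x| ^ p)
        rw [abs_of_nonneg (Real.rpow_nonneg (abs_nonneg _) _)] at h2
        simpa [hwdef] using h2
      have h2 : |w n x| - ε * |f n x - f₀ x| ^ p ≤ (C+1) * |f₀ x| ^ p := by nlinarith [key, h1]
      exact max_le h2 (by positivity)
    have hmw : ∀ n, AEStronglyMeasurable (h n) μ := fun n => (hhint n).aestronglyMeasurable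
    have hbound : ∀ n, ∀ᵐ x ∂μ, ‖h n x‖ ≤ (C+1) * |f₀ x| ^ p := fun n =>
      .of_forall fun x => by
        rw [Real.norm_eq_abs, abs_of_nonneg (le_max_right _ _)]
        exact hhle n x
    have hlim : ∀ᵐ x ∂μ, Tendsto (fun n => h n x) atTop (nhds 0) := by
      filter_upwards [hae] with x hx
      have t1 : Tendsto (fun n => |f n x| ^ p) atTop (nhds (|f₀ x| ^ p)) :=
        (hx.abs).rpow_const (Or.inr hp0.le)
      have t2 : Tendsto (fun n => |f n x - f₀ x| ^ p) atTop (nhds 0) := by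
        have t0 : Tendsto (fun n => f n x - f₀ x) atTop (nhds 0) := by
          simpa using hx.sub (tendsto_const_nhds (x := f₀ x))
        have h0 : Tendsto (fun n => |f n x - f₀ x|) atTop (nhds 0) := by simpa using t0.abs
        have h1 := h0.rpow_const (Or.inr hp0.le)
        simpa [Real.zero_rpow (ne_of_gt hp0)] using h1
      have tw : Tendsto (fun n => w n x) atTop (nhds 0) := by
        have h1 := (t1.sub t2).sub (tendsto_const_nhds (x := |f₀ x| ^ p))
        simpa [hwdef] using h1
      have h1 := (tw.abs.sub (t2.const_mul ε)).max (tendsto_const_nhds (x := (0:ℝ)))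
      simpa [hhdef] using h1
    have hIh : Tendsto (fun n => ∫ x, h n x ∂μ) atTop (nhds 0) := by
      have h1 := tendsto_integral_of_dominated_convergence (fun x => (C+1) * |f₀ x| ^ p)
        hmw (hint0.const_mul _) hbound hlim
      simpa using h1
    have hKey : ∀ n, |(∫ x, |f n x| ^ p ∂μ) - (∫ x, |f n x - f₀ x| ^ p ∂μ) - I₀| ≤
        (∫ x, h n x ∂μ) + ε * K := by
      intro n
      have hsplit : ∫ x, w n x ∂μ =
          (∫ x, |f n x| ^ p ∂μ) - (∫ x, |f n x - f₀ x| ^ p ∂μ) - I₀ := by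
        simp only [hwdef]
        have hi1 : Integrable (fun x => |f n x| ^ p - |f n x - f₀ x| ^ p) μ :=
          (hint n).sub (hintg n)
        rw [integral_sub hi1 hint0, integral_sub (hint n) (hintg n)]
      rw [← hsplit]
      have h1 : |∫ x, w n x ∂μ| ≤ ∫ x, |w n x| ∂μ := by
        simpa [Real.norm_eq_abs] using norm_integral_le_integral_norm (μ := μ) (w n)
      have h2 : ∀ x, |w n x| ≤ h n x + ε * |f n x - f₀ x| ^ p := by
        intro x
        have hle : |w n x| - ε * |f n x - f₀ x| ^ p ≤ h n x := le_max_left _ _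
        have hg : 0 ≤ ε * |f n x - f₀ x| ^ p := by positivity
        linarith
      have h3 : (∫ x, |w n x| ∂μ) ≤ ∫ x, (h n x + ε * |f n x - f₀ x| ^ p) ∂μ :=
        integral_mono (hwint n).abs ((hhint n).add ((hintg n).const_mul ε)) h2
      have hi2 : Integrable (fun x => ε * |f n x - f₀ x| ^ p) μ := (hintg n).const_mul ε
      rw [integral_add (hhint n) hi2, integral_const_mul] at h3
      have h4 : ε * (∫ x, |f n x - f₀ x| ^ p ∂μ) ≤ ε * K :=
        mul_le_mul_of_nonneg_left (hBle n) hεpos.le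
      linarith [h1, h3, h4]
    have hεK : ε * K ≤ ε' / 2 := by
      rw [hε, div_mul_eq_mul_div, div_le_div_iff₀ (by positivity) (by norm_num)]
      nlinarith
    have hev : ∀ᶠ n in atTop, (∫ x, h n x ∂μ) < ε' / 2 :=
      hIh.eventually_lt_const (by positivity)
    filter_upwards [hev] with n hn
    rw [Real.norm_eq_abs]
    calc |(∫ x, |f n x| ^ p ∂μ) - (∫ x, |f n x - f₀ x| ^ p ∂μ) - I₀|
        ≤ (∫ x, h n x ∂μ) + ε * K := hKey n
      _ < ε' / 2 + ε' / 2 := by linarith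
      _ = ε' := by ring
  have hfin := main.add (tendsto_const_nhds (x := I₀))
  simpa using hfin

end BrezisLiebAux

noncomputable def gagliardo (d : ℕ) (s p : ℝ) (u : EuclideanSpace ℝ (Fin d) → ℝ) : ℝ :=
  ∫ z : EuclideanSpace ℝ (Fin d) × EuclideanSpace ℝ (Fin d),
    |u z.1 - u z.2| ^ p / ‖z.1 - z.2‖ ^ ((d : ℝ) + s * p)

def MemDsp (d : ℕ) (s p : ℝ) (u : EuclideanSpace ℝ (Fin d) → ℝ) : Prop :=
  MemLp u (ENNReal.ofReal (d * p / (d - s * p))) volume ∧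
  Integrable (fun z : EuclideanSpace ℝ (Fin d) × EuclideanSpace ℝ (Fin d) =>
    |u z.1 - u z.2| ^ p / ‖z.1 - z.2‖ ^ ((d : ℝ) + s * p)) volume

/-- Brezis–Lieb splitting of the Gagliardo seminorm: if `u_n ⇀ u` weakly in `D^{s,p}`
(in particular bounded) and `u_n → u` a.e., then
`‖u_n‖_{D^{s,p}}^p - ‖u_n - u‖_{D^{s,p}}^p → ‖u‖_{D^{s,p}}^p`. -/
theorem gagliardo_brezis_lieb (d : ℕ) (s p : ℝ)
    (hs : 0 < s) (hs1 : s < 1) (hp : 1 < p) (hd : s * p < d)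
    (u : ℕ → EuclideanSpace ℝ (Fin d) → ℝ) (u₀ : EuclideanSpace ℝ (Fin d) → ℝ)
    (hu : ∀ n, MemDsp d s p (u n)) (hu₀ : MemDsp d s p u₀)
    (hbdd : ∃ M : ℝ, ∀ n, gagliardo d s p (u n) ≤ M)
    (hae : ∀ᵐ x : EuclideanSpace ℝ (Fin d), Tendsto (fun n => u n x) atTop (nhds (u₀ x))) :
    Tendsto (fun n => gagliardo d s p (u n) - gagliardo d s p (fun x => u n x - u₀ x))
      atTop (nhds (gagliardo d s p u₀)) := by
  have hp0 : (0:ℝ) < p := lt_trans one_pos hp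
  have hsp : (0:ℝ) < s * p := mul_pos hs hp0
  have hd1 : 0 < d := by
    rcases Nat.eq_zero_or_pos d with h | h
    · exfalso; rw [h] at hd; push_cast at hd; linarith
    · exact h
  haveI : Nonempty (Fin d) := ⟨⟨0, hd1⟩⟩
  haveI : Nontrivial (EuclideanSpace ℝ (Fin d)) := inferInstance
  haveI : NullSingletonClass (volume : Measure (EuclideanSpace ℝ (Fin d))) := by infer_instance
  set q : ℝ := ((d : ℝ) + s * p) / p with hq
  set f : ℕ → (EuclideanSpace ℝ (Fin d) × EuclideanSpace ℝ (Fin d)) → ℝ := fun n z => (u n z.1 - u n z.2) * ‖z.1 - z.2‖ ^ (-q) with hf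
  set f₀ : (EuclideanSpace ℝ (Fin d) × EuclideanSpace ℝ (Fin d)) → ℝ := fun z => (u₀ z.1 - u₀ z.2) * ‖z.1 - z.2‖ ^ (-q) with hf₀
  -- the diagonal is null
  have hdiag : ∀ᵐ z : (EuclideanSpace ℝ (Fin d) × EuclideanSpace ℝ (Fin d)), z.1 ≠ z.2 := by
    rw [Measure.volume_eq_prod]
    have hms : MeasurableSet {z : (EuclideanSpace ℝ (Fin d) × EuclideanSpace ℝ (Fin d)) | z.1 ≠ z.2} :=
      isClosed_diagonal.measurableSet.compl
    refine (Measure.ae_prod_mem_iff_ae_ae_mem hms).2 (Filter.Eventually.of_forall fun x => ?_)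
    have h0 : {y : EuclideanSpace ℝ (Fin d) |
        ¬ (x, y) ∈ {z : (EuclideanSpace ℝ (Fin d) × EuclideanSpace ℝ (Fin d)) | z.1 ≠ z.2}} = {x} := by
      ext y; simp [eq_comm]
    rw [MeasureTheory.ae_iff]
    simpa [h0] using measure_singleton x
  -- pointwise identity off the diagonal
  have key : ∀ (v : EuclideanSpace ℝ (Fin d) → ℝ) (z : (EuclideanSpace ℝ (Fin d) × EuclideanSpace ℝ (Fin d))), z.1 ≠ z.2 →
      |(v z.1 - v z.2) * ‖z.1 - z.2‖ ^ (-q)| ^ p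
        = |v z.1 - v z.2| ^ p / ‖z.1 - z.2‖ ^ ((d : ℝ) + s * p) := by
    intro v z hz
    have hr : (0:ℝ) < ‖z.1 - z.2‖ := by
      rw [norm_pos_iff, sub_ne_zero]; exact hz
    have hq1 : -q * p = -((d : ℝ) + s * p) := by
      rw [hq]; field_simp
    rw [abs_mul, abs_of_nonneg (Real.rpow_nonneg hr.le _),
      Real.mul_rpow (abs_nonneg _) (Real.rpow_nonneg hr.le _),
      ← Real.rpow_mul hr.le, hq1, Real.rpow_neg hr.le, div_eq_mul_inv]
  -- gagliardo as an integral of |f|^p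
  have hg_eq : ∀ v : EuclideanSpace ℝ (Fin d) → ℝ,
      gagliardo d s p v = ∫ z : (EuclideanSpace ℝ (Fin d) × EuclideanSpace ℝ (Fin d)), |(v z.1 - v z.2) * ‖z.1 - z.2‖ ^ (-q)| ^ p := by
    intro v
    exact (integral_congr_ae (hdiag.mono fun z hz => key v z hz)).symm
  -- measurability
  have hmeas : ∀ v : EuclideanSpace ℝ (Fin d) → ℝ, AEStronglyMeasurable v volume →
      AEStronglyMeasurable (fun z : (EuclideanSpace ℝ (Fin d) × EuclideanSpace ℝ (Fin d)) => (v z.1 - v z.2) * ‖z.1 - z.2‖ ^ (-q)) volume := by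
    intro v hv
    have h1 : AEStronglyMeasurable (fun z : (EuclideanSpace ℝ (Fin d) × EuclideanSpace ℝ (Fin d)) => v z.1) volume := by
      rw [Measure.volume_eq_prod]; exact hv.comp_fst
    have h2 : AEStronglyMeasurable (fun z : (EuclideanSpace ℝ (Fin d) × EuclideanSpace ℝ (Fin d)) => v z.2) volume := by
      rw [Measure.volume_eq_prod]; exact hv.comp_snd
    have h3 : Measurable (fun z : (EuclideanSpace ℝ (Fin d) × EuclideanSpace ℝ (Fin d)) => ‖z.1 - z.2‖ ^ (-q)) :=
      (measurable_fst.sub measurable_snd).norm.pow measurable_const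
    exact (h1.sub h2).mul h3.aestronglyMeasurable
  have hm : ∀ n, AEStronglyMeasurable (f n) volume := fun n =>
    hmeas (u n) (hu n).1.aestronglyMeasurable
  have hm0 : AEStronglyMeasurable f₀ volume := hmeas u₀ (hu₀).1.aestronglyMeasurable
  -- integrability
  have hint : ∀ n, Integrable (fun z : (EuclideanSpace ℝ (Fin d) × EuclideanSpace ℝ (Fin d)) => |f n z| ^ p) volume := by
    intro n
    exact ((hu n).2).congr ((hdiag.mono fun z hz => (key (u n) z hz).symm))
  have hint0 : Integrable (fun z : (EuclideanSpace ℝ (Fin d) × EuclideanSpace ℝ (Fin d)) => |f₀ z| ^ p) volume :=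
    (hu₀.2).congr ((hdiag.mono fun z hz => (key u₀ z hz).symm))
  -- bound
  obtain ⟨M, hM⟩ := hbdd
  have hM' : ∀ n, (∫ z : (EuclideanSpace ℝ (Fin d) × EuclideanSpace ℝ (Fin d)), |f n z| ^ p) ≤ M := by
    intro n; rw [← hg_eq (u n)]; exact hM n
  -- a.e. convergence on the product
  have haeprod : ∀ᵐ z : (EuclideanSpace ℝ (Fin d) × EuclideanSpace ℝ (Fin d)), Tendsto (fun n => f n z) atTop (nhds (f₀ z)) := by
    have h1 : ∀ᵐ z : (EuclideanSpace ℝ (Fin d) × EuclideanSpace ℝ (Fin d)), Tendsto (fun n => u n z.1) atTop (nhds (u₀ z.1)) := by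
      rw [Measure.volume_eq_prod]; exact Measure.quasiMeasurePreserving_fst.ae hae
    have h2 : ∀ᵐ z : (EuclideanSpace ℝ (Fin d) × EuclideanSpace ℝ (Fin d)), Tendsto (fun n => u n z.2) atTop (nhds (u₀ z.2)) := by
      rw [Measure.volume_eq_prod]; exact Measure.quasiMeasurePreserving_snd.ae hae
    filter_upwards [h1, h2] with z hz1 hz2
    exact (hz1.sub hz2).mul_const _
  -- apply Brezis–Lieb
  have hBL := brezisLieb hp f f₀ hm hm0 hint hint0 hM' haeprod
  -- rewrite each term
  have e1 : ∀ n, (∫ z : (EuclideanSpace ℝ (Fin d) × EuclideanSpace ℝ (Fin d)), |f n z| ^ p) = gagliardo d s p (u n) := fun n => (hg_eq (u n)).symm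
  have e0 : (∫ z : (EuclideanSpace ℝ (Fin d) × EuclideanSpace ℝ (Fin d)), |f₀ z| ^ p) = gagliardo d s p u₀ := (hg_eq u₀).symm
  have e2 : ∀ n, (∫ z : (EuclideanSpace ℝ (Fin d) × EuclideanSpace ℝ (Fin d)), |f n z - f₀ z| ^ p) = gagliardo d s p (fun x => u n x - u₀ x) := by
    intro n
    rw [hg_eq (fun x => u n x - u₀ x)]
    congr 1
    funext z
    congr 2
    simp only [hf, hf₀]
    ring
  rw [← e0]
  refine hBL.congr fun n => ?_
  rw [e1 n, e2 n]
end
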